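/- arXiv:1506.04455 — 2 statements merged into one kernel-verified Lean document; each statement's English description precedes it below -/
import Mathlib

section
/- Let p be a nonzero Laurent polynomial in two variables over ℤ. Suppose there are integers m and n with coeff p (i, j) = coeff p (m − i, n − j) for all (i, j) ∈ ℤ × ℤ, and suppose in addition that there exist an integer ω ≥ 1, an integer c, a sign ε ∈ {1, −1}, and a nonzero one-variable Laurent polynomial g over ℤ of even breadth, such that p(1, y) = ε · y^c · (1 + y + ⋯ + y^{ω−1}) · g(y). Then the y-breadth of p is congruent to ω − 1 modulo 2. (This is the algebraic content of Lemma 2.2: for an oriented two-component link L₁ ∪ L₂ in a homology sphere with linking number ω ≥ 1, the Torres conditions (T1) and (T2) provide exactly these hypotheses for p = Δ_{L₁∪L₂} with g = Δ_{L₂}, whose breadth is even since L₂ is a knot; the conclusion is br_y(Δ_{L₁∪L₂}) ≡ ω − 1 (mod 2).) -/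
/-- The maximum `y`-exponent appearing in a two-variable Laurent polynomial
(junk value `0` for the zero polynomial). -/
noncomputable def ymax (p : AddMonoidAlgebra ℤ (ℤ × ℤ)) : ℤ :=
  WithBot.unbotD 0 ((p.coeff.support.image Prod.snd).max)

/-- The minimum `y`-exponent appearing in a two-variable Laurent polynomial
(junk value `0` for the zero polynomial). -/
noncomputable def ymin (p : AddMonoidAlgebra ℤ (ℤ × ℤ)) : ℤ :=
  WithTop.untopD 0 ((p.coeff.support.image Prod.snd).min)

/-- The `y`-breadth of a two-variable Laurent polynomial. -/
noncomputable def ybreadth (p : AddMonoidAlgebra ℤ (ℤ × ℤ)) : ℤ := ymax p - ymin p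

/-- The breadth of a one-variable Laurent polynomial:
maximum degree minus minimum degree of its support. -/
noncomputable def breadth (q : AddMonoidAlgebra ℤ ℤ) : ℤ :=
  WithBot.unbotD 0 (q.coeff.support.max) - WithTop.untopD 0 (q.coeff.support.min)

/-- The specialization `p(1, y)`: the one-variable Laurent polynomial whose coefficient
of `y^j` is `Σ_i coeff p (i, j)`. -/
noncomputable def specOne (p : AddMonoidAlgebra ℤ (ℤ × ℤ)) : AddMonoidAlgebra ℤ ℤ :=
  AddMonoidAlgebra.ofCoeff (Finsupp.mapDomain Prod.snd p.coeff)


lemma myMulApplyEq (p q : AddMonoidAlgebra ℤ ℤ) (ap aq : ℤ)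
    (h : ∀ a ∈ p.coeff.support, ∀ b ∈ q.coeff.support, a + b = ap + aq → a = ap) :
    (p * q).coeff (ap + aq) = p.coeff ap * q.coeff aq := by
  classical
  rw [AddMonoidAlgebra.coeff_mul]
  simp only [Finsupp.sum]
  rw [Finset.sum_eq_single ap]
  · rw [Finset.sum_eq_single aq]
    · simp
    · intro b hb hbne; rw [if_neg (by omega)]
    · intro hnb; rw [Finsupp.notMem_support_iff.1 hnb]; simp
  · intro a ha hane
    refine Finset.sum_eq_zero fun b hb => ?_
    rw [if_neg fun hc => hane (h a ha b hb hc)]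
  · intro hna
    simp [Finsupp.notMem_support_iff.1 hna]

lemma myMulApplyZero (p q : AddMonoidAlgebra ℤ ℤ) (c : ℤ)
    (h : ∀ a ∈ p.coeff.support, ∀ b ∈ q.coeff.support, a + b ≠ c) : (p * q).coeff c = 0 := by
  classical
  rw [AddMonoidAlgebra.coeff_mul]
  simp only [Finsupp.sum]
  exact Finset.sum_eq_zero fun a ha => Finset.sum_eq_zero fun b hb => if_neg (h a ha b hb)

lemma mySuppNE {p : AddMonoidAlgebra ℤ ℤ} (hp : p ≠ 0) : p.coeff.support.Nonempty :=
  Finsupp.support_nonempty_iff.mpr (AddMonoidAlgebra.coeff_eq_zero.not.mpr hp)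

lemma mySuppNE2 {p : AddMonoidAlgebra ℤ (ℤ × ℤ)} (hp : p ≠ 0) : p.coeff.support.Nonempty :=
  Finsupp.support_nonempty_iff.mpr (AddMonoidAlgebra.coeff_eq_zero.not.mpr hp)

lemma myMax'Mul (p q : AddMonoidAlgebra ℤ ℤ) (hp : p ≠ 0) (hq : q ≠ 0) :
    (p*q).coeff.support.max' (mySuppNE (mul_ne_zero hp hq)) =
      p.coeff.support.max' (mySuppNE hp) + q.coeff.support.max' (mySuppNE hq) := by
  apply le_antisymm
  · apply Finset.max'_le
    intro c hc
    by_contra hlt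
    push_neg at hlt
    exact (Finsupp.mem_support_iff.1 hc) (myMulApplyZero p q c (fun a ha b hb => by
      have := Finset.le_max' _ a ha; have := Finset.le_max' _ b hb; omega))
  · apply Finset.le_max'
    rw [Finsupp.mem_support_iff, myMulApplyEq p q _ _ (fun a ha b hb hc => by
      have := Finset.le_max' _ a ha; have := Finset.le_max' _ b hb; omega)]
    exact mul_ne_zero (Finsupp.mem_support_iff.1 (Finset.max'_mem _ _))
      (Finsupp.mem_support_iff.1 (Finset.max'_mem _ _))

lemma myMin'Mul (p q : AddMonoidAlgebra ℤ ℤ) (hp : p ≠ 0) (hq : q ≠ 0) :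
    (p*q).coeff.support.min' (mySuppNE (mul_ne_zero hp hq)) =
      p.coeff.support.min' (mySuppNE hp) + q.coeff.support.min' (mySuppNE hq) := by
  apply le_antisymm
  · apply Finset.min'_le
    rw [Finsupp.mem_support_iff, myMulApplyEq p q _ _ (fun a ha b hb hc => by
      have := Finset.min'_le _ a ha; have := Finset.min'_le _ b hb; omega)]
    exact mul_ne_zero (Finsupp.mem_support_iff.1 (Finset.min'_mem _ _))
      (Finsupp.mem_support_iff.1 (Finset.min'_mem _ _))
  · apply Finset.le_min'
    intro c hc
    by_contra hlt
    push_neg at hlt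
    exact (Finsupp.mem_support_iff.1 hc) (myMulApplyZero p q c (fun a ha b hb => by
      have := Finset.min'_le _ a ha; have := Finset.min'_le _ b hb; omega))

lemma myBreadthEq (q : AddMonoidAlgebra ℤ ℤ) (hq : q ≠ 0) :
    breadth q = q.coeff.support.max' (mySuppNE hq) - q.coeff.support.min' (mySuppNE hq) := by
  unfold breadth
  rw [← Finset.coe_max' (mySuppNE hq), ← Finset.coe_min' (mySuppNE hq)]
  rfl

lemma myBreadthMul (p q : AddMonoidAlgebra ℤ ℤ) (hp : p ≠ 0) (hq : q ≠ 0) :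
    breadth (p * q) = breadth p + breadth q := by
  rw [myBreadthEq _ (mul_ne_zero hp hq), myBreadthEq _ hp, myBreadthEq _ hq,
    myMax'Mul p q hp hq, myMin'Mul p q hp hq]
  ring

lemma myBreadthSingle (c : ℤ) : breadth (AddMonoidAlgebra.single c (1 : ℤ)) = 0 := by
  unfold breadth
  rw [AddMonoidAlgebra.coeff_single, Finsupp.support_single_ne_zero c one_ne_zero]
  simp

lemma mySymmSum (s : Finset ℤ) (h : s.Nonempty) (n : ℤ) (hs : ∀ j ∈ s, n - j ∈ s) :
    s.max' h + s.min' h = n := by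
  have h1 := s.le_max' _ (hs _ (s.min'_mem h))
  have h2 := s.min'_le _ (hs _ (s.max'_mem h))
  omega

lemma mySApply (ω : ℤ) (hω : 1 ≤ ω) (j : ℤ) :
    (∑ k ∈ Finset.range ω.toNat, AddMonoidAlgebra.single (k : ℤ) (1 : ℤ)).coeff j
      = if 0 ≤ j ∧ j < ω then 1 else 0 := by
  classical
  rw [AddMonoidAlgebra.coeff_sum, Finset.sum_apply']
  simp only [AddMonoidAlgebra.coeff_single, Finsupp.single_apply]
  by_cases h : 0 ≤ j ∧ j < ω
  · rw [Finset.sum_eq_single j.toNat]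
    · rw [if_pos (by omega), if_pos h]
    · intro k hk hkne
      rw [if_neg (by simp only [Finset.mem_range] at hk; omega)]
    · intro hnm
      simp only [Finset.mem_range] at hnm
      omega
  · rw [if_neg h]
    refine Finset.sum_eq_zero fun k hk => ?_
    simp only [Finset.mem_range] at hk
    rw [if_neg (by omega)]

lemma mySNe (ω : ℤ) (hω : 1 ≤ ω) :
    (∑ k ∈ Finset.range ω.toNat, AddMonoidAlgebra.single (k : ℤ) (1 : ℤ)) ≠ 0 := by
  intro h
  have := mySApply ω hω 0
  rw [h, if_pos (by omega)] at this
  simp at this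

lemma mySBreadth (ω : ℤ) (hω : 1 ≤ ω) :
    breadth (∑ k ∈ Finset.range ω.toNat, AddMonoidAlgebra.single (k : ℤ) (1 : ℤ)) = ω - 1 := by
  set S := ∑ k ∈ Finset.range ω.toNat, AddMonoidAlgebra.single (k : ℤ) (1 : ℤ) with hS
  have hmem : ∀ j : ℤ, j ∈ S.coeff.support ↔ (0 ≤ j ∧ j < ω) := by
    intro j
    rw [Finsupp.mem_support_iff, mySApply ω hω j]
    split_ifs with h <;> simp [h]
  rw [myBreadthEq _ (mySNe ω hω)]
  have hmax : S.coeff.support.max' (mySuppNE (mySNe ω hω)) = ω - 1 := by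
    apply le_antisymm
    · have := (hmem _).1 (S.coeff.support.max'_mem (mySuppNE (mySNe ω hω)))
      omega
    · exact Finset.le_max' _ _ ((hmem _).2 (by omega))
  have hmin : S.coeff.support.min' (mySuppNE (mySNe ω hω)) = 0 := by
    apply le_antisymm
    · exact Finset.min'_le _ _ ((hmem _).2 (by omega))
    · have := (hmem _).1 (S.coeff.support.min'_mem (mySuppNE (mySNe ω hω)))
      omega
  rw [hmax, hmin]
  ring

lemma mySpecApply (p : AddMonoidAlgebra ℤ (ℤ × ℤ)) (x : ℤ) :
    (Finsupp.mapDomain Prod.snd p.coeff) x = ∑ a ∈ p.coeff.support, if a.2 = x then p.coeff a else 0 := by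
  classical
  rw [Finsupp.mapDomain, Finsupp.sum_apply, Finsupp.sum]
  exact Finset.sum_congr rfl fun a _ => Finsupp.single_apply

lemma mySpecSymm (p : AddMonoidAlgebra ℤ (ℤ × ℤ)) (m n : ℤ)
    (hsym : ∀ i j : ℤ, p.coeff (i, j) = p.coeff (m - i, n - j)) (j : ℤ) :
    (Finsupp.mapDomain Prod.snd p.coeff) (n - j) = (Finsupp.mapDomain Prod.snd p.coeff) j := by
  classical
  rw [mySpecApply, mySpecApply]
  have hmem : ∀ a : ℤ × ℤ, a ∈ p.coeff.support → (m - a.1, n - a.2) ∈ p.coeff.support := by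
    intro a ha
    rw [Finsupp.mem_support_iff] at ha ⊢
    rw [← hsym a.1 a.2]
    simpa using ha
  refine Finset.sum_nbij' (fun a => (m - a.1, n - a.2)) (fun a => (m - a.1, n - a.2))
    hmem hmem (fun a _ => by simp) (fun a _ => by simp) ?_
  intro a _
  have h1 : (m - a.1, n - a.2).2 = j ↔ a.2 = n - j := by simp; omega
  have h2 : p.coeff (m - a.1, n - a.2) = p.coeff a := by rw [← hsym a.1 a.2]
  by_cases hc : a.2 = n - j
  · rw [if_pos hc, if_pos (h1.mpr hc), h2]
  · rw [if_neg hc, if_neg (fun h => hc (h1.mp h))]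

/-- Lemma 2.2 of the paper (arithmetic content): if a nonzero two-variable Laurent
polynomial `p` over `ℤ` satisfies the symmetry `coeff p (i, j) = coeff p (m − i, n − j)`
and its specialization `p(1, y)` factors as `ε · y^c · (1 + y + ⋯ + y^{ω−1}) · g(y)`
with `ω ≥ 1`, `ε = ±1` and `g` a nonzero one-variable Laurent polynomial of even
breadth, then the `y`-breadth of `p` is congruent to `ω − 1` modulo `2`. -/
theorem ybreadth_modtwo_eq_linking_sub_one (p : AddMonoidAlgebra ℤ (ℤ × ℤ)) (hp : p ≠ 0)
    (m n : ℤ) (hsym : ∀ i j : ℤ, p.coeff (i, j) = p.coeff (m - i, n - j))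
    (ω : ℤ) (hω : 1 ≤ ω) (c : ℤ) (ε : ℤ) (hε : ε = 1 ∨ ε = -1)
    (g : AddMonoidAlgebra ℤ ℤ) (hg : g ≠ 0) (hgbr : Even (breadth g))
    (hfac : specOne p =
      ε • (AddMonoidAlgebra.single c (1 : ℤ) *
        (∑ k ∈ Finset.range ω.toNat, AddMonoidAlgebra.single (k : ℤ) (1 : ℤ)) * g)) :
    ybreadth p ≡ ω - 1 [ZMOD 2] := by
  classical
  set q : AddMonoidAlgebra ℤ ℤ := specOne p with hqdef
  have hsingle_ne : (AddMonoidAlgebra.single c (1 : ℤ)) ≠ 0 :=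
    fun h => one_ne_zero (AddMonoidAlgebra.single_eq_zero.mp h)
  have hS_ne := mySNe ω hω
  set x : AddMonoidAlgebra ℤ ℤ := AddMonoidAlgebra.single c (1 : ℤ) *
      (∑ k ∈ Finset.range ω.toNat, AddMonoidAlgebra.single (k : ℤ) (1 : ℤ)) * g with hxdef
  have hx_ne : x ≠ 0 := mul_ne_zero (mul_ne_zero hsingle_ne hS_ne) hg
  have hq_ne : q ≠ 0 := by
    rw [hfac]
    rcases hε with rfl | rfl
    · simpa using hx_ne
    · rw [neg_smul, one_smul]
      exact neg_ne_zero.mpr hx_ne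
  have hbx : breadth x = (ω - 1) + breadth g := by
    rw [hxdef, myBreadthMul _ _ (mul_ne_zero hsingle_ne hS_ne) hg,
      myBreadthMul _ _ hsingle_ne hS_ne, myBreadthSingle, mySBreadth ω hω]
    ring
  have hbq : breadth q = (ω - 1) + breadth g := by
    rw [hfac]
    rcases hε with rfl | rfl
    · rw [one_smul]; exact hbx
    · rw [neg_smul, one_smul, ← hbx]
      unfold breadth
      rw [AddMonoidAlgebra.coeff_neg, Finsupp.support_neg]
  -- symmetry of the support of q
  have hsuppq : ∀ j ∈ q.coeff.support, n - j ∈ q.coeff.support := by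
    intro j hj
    rw [Finsupp.mem_support_iff] at hj ⊢
    rw [hqdef] at hj ⊢
    rw [specOne, AddMonoidAlgebra.coeff_ofCoeff] at hj ⊢
    rw [mySpecSymm p m n hsym j]
    exact hj
  have hqsum := mySymmSum q.coeff.support (mySuppNE hq_ne) n hsuppq
  have hbq2 : breadth q = q.coeff.support.max' (mySuppNE hq_ne) - q.coeff.support.min' (mySuppNE hq_ne) :=
    myBreadthEq q hq_ne
  -- symmetry of the y-support of p
  have hne2 : (p.coeff.support.image Prod.snd).Nonempty := by
    rw [Finset.image_nonempty]; exact mySuppNE2 hp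
  have hs2 : ∀ j ∈ p.coeff.support.image Prod.snd, n - j ∈ p.coeff.support.image Prod.snd := by
    intro j hj
    rw [Finset.mem_image] at hj ⊢
    obtain ⟨a, ha, rfl⟩ := hj
    refine ⟨(m - a.1, n - a.2), ?_, rfl⟩
    rw [Finsupp.mem_support_iff] at ha ⊢
    rw [← hsym a.1 a.2]
    simpa using ha
  have hysum := mySymmSum _ hne2 n hs2
  have hym : ymax p = (p.coeff.support.image Prod.snd).max' hne2 := by
    unfold ymax
    rw [← Finset.coe_max' hne2]
    rfl
  have hyn : ymin p = (p.coeff.support.image Prod.snd).min' hne2 := by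
    unfold ymin
    rw [← Finset.coe_min' hne2]
    rfl
  obtain ⟨k, hk⟩ := hgbr
  show ybreadth p % 2 = (ω - 1) % 2
  unfold ybreadth
  rw [hym, hyn]
  omega
end

section
/- Let p be a nonzero Laurent polynomial in two variables over ℤ with y-breadth ℓ, and let ω ≥ 1 be an integer. Suppose there exist a real constant D and infinitely many positive integers n such that the specialization p(t, t^{−nω}) is nonzero with breadth at most n·ω² + D. Then ℓ ≤ ω. (This is the core inequality in the proof of Proposition 1.9 of the paper: if K_n are L-space knots in a twist family then 2g(K_n) − 1 ≤ r_n = r₀ + nω² bounds the breadth of Δ_{K∪c}(t, t^{−nω}), forcing the y-breadth of Δ_{K∪c} to be at most ω.) -/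
/-- For `c : ℤ`, the specialization `p(t, t^c)`: the image of `p` under the map sending
the monomial `x^i y^j` to `t^{i + c·j}`. -/
noncomputable def specPow (c : ℤ) (p : AddMonoidAlgebra ℤ (ℤ × ℤ)) : AddMonoidAlgebra ℤ ℤ :=
  AddMonoidAlgebra.ofCoeff (Finsupp.mapDomain (fun ij => ij.1 + c * ij.2) p.coeff)

/-- If a point `a` of the support is the unique maximizer (resp. minimizer) of the
specialization exponent, then its value lies in the support of the specialization. -/
lemma specPow_apply_eq (c : ℤ) (p : AddMonoidAlgebra ℤ (ℤ × ℤ)) (a : ℤ × ℤ)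
    (ha : a ∈ p.coeff.support)
    (huniq : ∀ ij ∈ p.coeff.support, ij.1 + c * ij.2 = a.1 + c * a.2 → ij = a) :
    (specPow c p).coeff (a.1 + c * a.2) = p.coeff a := by
  classical
  rw [specPow, AddMonoidAlgebra.coeff_ofCoeff, Finsupp.mapDomain, Finsupp.sum_apply, Finsupp.sum,
    Finset.sum_eq_single a]
  · rw [Finsupp.single_apply, if_pos rfl]
  · intro ij hij hne
    rw [Finsupp.single_apply, if_neg]
    intro hEq
    exact hne (huniq ij hij hEq)
  · intro hna
    exact absurd ha hna

/-- The core inequality in the proof of Proposition 1.9 of the paper: if `p` is a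
nonzero two-variable Laurent polynomial, `ω ≥ 1`, and there are a real constant `D`
and infinitely many positive integers `n` for which `p(t, t^{−nω})` is nonzero with
breadth at most `n·ω² + D`, then the `y`-breadth of `p` is at most `ω`. -/
theorem ybreadth_le_of_infinitely_many_small_breadth
    (p : AddMonoidAlgebra ℤ (ℤ × ℤ)) (hp : p ≠ 0) (ω : ℤ) (hω : 1 ≤ ω) (D : ℝ)
    (h : {n : ℤ | 0 < n ∧ specPow (-(n * ω)) p ≠ 0 ∧
        (breadth (specPow (-(n * ω)) p) : ℝ) ≤ (n : ℝ) * (ω : ℝ) ^ 2 + D}.Infinite) :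
    ybreadth p ≤ ω := by
  classical
  by_contra hlt
  push_neg at hlt
  have hS : p.coeff.support.Nonempty := Finsupp.support_nonempty_iff.mpr (AddMonoidAlgebra.coeff_eq_zero.not.mpr hp)
  have hTne : (p.coeff.support.image Prod.snd).Nonempty := hS.image _
  set jmax := (p.coeff.support.image Prod.snd).max' hTne with hjmaxdef
  set jmin := (p.coeff.support.image Prod.snd).min' hTne with hjmindef
  have hymax : ymax p = jmax := by
    rw [ymax, ← Finset.coe_max' hTne]; rfl
  have hymin : ymin p = jmin := by
    rw [ymin, ← Finset.coe_min' hTne]; rfl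
  have hyb : ybreadth p = jmax - jmin := by rw [ybreadth, hymax, hymin]
  rw [hyb] at hlt
  -- x-extremes
  have hUne : (p.coeff.support.image Prod.fst).Nonempty := hS.image _
  set Imax := (p.coeff.support.image Prod.fst).max' hUne with hImaxdef
  set Imin := (p.coeff.support.image Prod.fst).min' hUne with hImindef
  have hIle : Imin ≤ Imax := by
    obtain ⟨x, hx⟩ := hUne
    exact le_trans (Finset.min'_le _ _ hx) (Finset.le_max' _ _ hx)
  have hIub : ∀ ij ∈ p.coeff.support, ij.1 ≤ Imax := fun ij hij =>
    Finset.le_max' _ _ (Finset.mem_image_of_mem _ hij)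
  have hIlb : ∀ ij ∈ p.coeff.support, Imin ≤ ij.1 := fun ij hij =>
    Finset.min'_le _ _ (Finset.mem_image_of_mem _ hij)
  -- pick a : maximal x among the row y = jmin
  have hRne : ((p.coeff.support.filter (fun ij => ij.2 = jmin))).Nonempty := by
    obtain ⟨j, hj⟩ := Finset.mem_image.mp (Finset.min'_mem _ hTne)
    exact ⟨j, Finset.mem_filter.mpr ⟨hj.1, hj.2⟩⟩
  obtain ⟨a, haR, haMax⟩ :=
    Finset.exists_max_image (p.coeff.support.filter (fun ij => ij.2 = jmin)) Prod.fst hRne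
  have haS : a ∈ p.coeff.support := (Finset.mem_filter.mp haR).1
  have ha2 : a.2 = jmin := (Finset.mem_filter.mp haR).2
  -- pick b : minimal x among the row y = jmax
  have hQne : ((p.coeff.support.filter (fun ij => ij.2 = jmax))).Nonempty := by
    obtain ⟨j, hj⟩ := Finset.mem_image.mp (Finset.max'_mem _ hTne)
    exact ⟨j, Finset.mem_filter.mpr ⟨hj.1, hj.2⟩⟩
  obtain ⟨b, hbQ, hbMin⟩ :=
    Finset.exists_min_image (p.coeff.support.filter (fun ij => ij.2 = jmax)) Prod.fst hQne
  have hbS : b ∈ p.coeff.support := (Finset.mem_filter.mp hbQ).1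
  have hb2 : b.2 = jmax := (Finset.mem_filter.mp hbQ).2
  have hjub : ∀ ij ∈ p.coeff.support, ij.2 ≤ jmax := fun ij hij =>
    Finset.le_max' _ _ (Finset.mem_image_of_mem _ hij)
  have hjlb : ∀ ij ∈ p.coeff.support, jmin ≤ ij.2 := fun ij hij =>
    Finset.min'_le _ _ (Finset.mem_image_of_mem _ hij)
  -- choose a large n from the infinite set
  set K := (Imax - Imin) + max 0 ⌈D⌉ with hK
  obtain ⟨n, hnE, hnK⟩ : ∃ n ∈ {n : ℤ | 0 < n ∧ specPow (-(n * ω)) p ≠ 0 ∧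
      (breadth (specPow (-(n * ω)) p) : ℝ) ≤ (n : ℝ) * (ω : ℝ) ^ 2 + D}, K < n := by
    by_contra hcon
    push_neg at hcon
    refine h ?_
    refine (Set.finite_Icc 1 K).subset ?_
    intro n hn
    exact ⟨hn.1, hcon n hn⟩
  obtain ⟨hn0, hqne, hbd⟩ := hnE
  have hKB : Imax - Imin ≤ K := by
    have : (0 : ℤ) ≤ max 0 ⌈D⌉ := le_max_left _ _
    omega
  have hnB : Imax - Imin < n := lt_of_le_of_lt hKB hnK
  have hnω : Imax - Imin < n * ω := lt_of_lt_of_le hnB (le_mul_of_one_le_right (by omega) hω)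
  have hnωpos : 0 < n * ω := by positivity
  set c : ℤ := -(n * ω) with hc
  -- unique maximizer a
  have keyA : ∀ ij ∈ p.coeff.support, ij ≠ a → ij.1 + c * ij.2 < a.1 + c * a.2 := by
    intro ij hij hne
    rcases eq_or_ne ij.2 jmin with h2 | h2
    · have hle : ij.1 ≤ a.1 := haMax ij (Finset.mem_filter.mpr ⟨hij, h2⟩)
      have : ij.1 ≠ a.1 := by
        intro hEq
        exact hne (Prod.ext hEq (h2.trans ha2.symm))
      have hlt1 : ij.1 < a.1 := lt_of_le_of_ne hle this
      rw [hc, h2, ha2]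
      nlinarith
    · have h2' : jmin + 1 ≤ ij.2 := by
        have := hjlb ij hij
        omega
      have h1 : ij.1 ≤ Imax := hIub ij hij
      have h3 : Imin ≤ a.1 := hIlb a haS
      rw [hc, ha2]
      nlinarith
  -- unique minimizer b
  have keyB : ∀ ij ∈ p.coeff.support, ij ≠ b → b.1 + c * b.2 < ij.1 + c * ij.2 := by
    intro ij hij hne
    rcases eq_or_ne ij.2 jmax with h2 | h2
    · have hle : b.1 ≤ ij.1 := hbMin ij (Finset.mem_filter.mpr ⟨hij, h2⟩)
      have : b.1 ≠ ij.1 := by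
        intro hEq
        exact hne (Prod.ext hEq.symm (h2.trans hb2.symm))
      have hlt1 : b.1 < ij.1 := lt_of_le_of_ne hle this
      rw [hc, h2, hb2]
      nlinarith
    · have h2' : ij.2 ≤ jmax - 1 := by
        have := hjub ij hij
        omega
      have h1 : Imin ≤ ij.1 := hIlb ij hij
      have h3 : b.1 ≤ Imax := hIub b hbS
      rw [hc, hb2]
      nlinarith
  -- membership of the extreme exponents in the support of the specialization
  have hqa : (specPow c p).coeff (a.1 + c * a.2) = p.coeff a := by
    refine specPow_apply_eq c p a haS ?_
    intro ij hij hEq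
    by_contra hne
    exact absurd hEq (ne_of_lt (keyA ij hij hne))
  have hqb : (specPow c p).coeff (b.1 + c * b.2) = p.coeff b := by
    refine specPow_apply_eq c p b hbS ?_
    intro ij hij hEq
    by_contra hne
    exact absurd hEq.symm (ne_of_lt (keyB ij hij hne))
  have hamem : a.1 + c * a.2 ∈ (specPow c p).coeff.support := by
    rw [Finsupp.mem_support_iff, hqa]
    exact Finsupp.mem_support_iff.mp haS
  have hbmem : b.1 + c * b.2 ∈ (specPow c p).coeff.support := by
    rw [Finsupp.mem_support_iff, hqb]
    exact Finsupp.mem_support_iff.mp hbS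
  have hqSne : (specPow c p).coeff.support.Nonempty := ⟨_, hamem⟩
  -- breadth bound from below
  have hbr : (a.1 + c * a.2) - (b.1 + c * b.2) ≤ breadth (specPow c p) := by
    rw [breadth, ← Finset.coe_max' hqSne, ← Finset.coe_min' hqSne]
    have h1 : a.1 + c * a.2 ≤ (specPow c p).coeff.support.max' hqSne :=
      Finset.le_max' _ _ hamem
    have h2 : (specPow c p).coeff.support.min' hqSne ≤ b.1 + c * b.2 :=
      Finset.min'_le _ _ hbmem
    have hcast : ((specPow c p).coeff.support.max' hqSne : WithBot ℤ).unbotD 0 =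
        (specPow c p).coeff.support.max' hqSne := rfl
    have hcast2 : ((specPow c p).coeff.support.min' hqSne : WithTop ℤ).untopD 0 =
        (specPow c p).coeff.support.min' hqSne := rfl
    rw [hcast, hcast2]
    omega
  -- final arithmetic
  have hℓ : ω + 1 ≤ jmax - jmin := hlt
  have hval : (a.1 + c * a.2) - (b.1 + c * b.2)
      = (a.1 - b.1) + n * ω * (jmax - jmin) := by
    rw [hc, ha2, hb2]; ring
  have hab : Imin - Imax ≤ a.1 - b.1 := by
    have := hIlb a haS
    have := hIub b hbS
    omega
  have hlow : n * ω * ω + n - (Imax - Imin) ≤ breadth (specPow c p) := by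
    have h1 : n * ω * (ω + 1) ≤ n * ω * (jmax - jmin) :=
      mul_le_mul_of_nonneg_left hℓ (le_of_lt hnωpos)
    have h2 : n * 1 ≤ n * ω := mul_le_mul_of_nonneg_left hω (by omega)
    nlinarith [hbr, hval, hab]
  -- compare with the upper bound over ℝ
  have hlowR : ((n : ℝ) * ω * ω + n - (Imax - Imin) : ℝ) ≤ (breadth (specPow c p) : ℝ) := by
    exact_mod_cast Int.cast_le.mpr hlow
  have hnR : (K : ℝ) < (n : ℝ) := by exact_mod_cast hnK
  have hDK : D + (Imax - Imin : ℤ) ≤ (K : ℝ) := by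
    rw [hK]
    push_cast
    have h1 : D ≤ (⌈D⌉ : ℝ) := Int.le_ceil D
    have h2 : (⌈D⌉ : ℝ) ≤ max (0:ℝ) (⌈D⌉ : ℝ) := le_max_right _ _
    linarith
  have hsq : (n : ℝ) * (ω : ℝ) ^ 2 = (n : ℝ) * ω * ω := by ring
  rw [hsq] at hbd
  have : (n : ℝ) ≤ D + (Imax - Imin : ℤ) := by
    have := hbd
    push_cast at hlowR ⊢
    linarith
  linarith
end
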